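/- Let X ⊆ {0,1}^ℕ be a uniquely ergodic subshift, i.e., there is exactly one T-invariant Borel probability measure ν with ν(X) = 1. Then for every function assigning to each β > 0 an equilibrium state μ_β for βφ_X, we have μ_β → ν in the weak-* topology as β → +∞. -/

import Mathlib

open MeasureTheory Filter Topology
open scoped ENNReal Classical

noncomputable section

/-- The configuration space `{0,1}^ℕ` (with `false = 0`, `true = 1`). -/
abbrev Conf : Type := ℕ → Bool

/-- The shift map `(Tx)(n) = x(n+1)`. -/
def shiftMap (x : Conf) : Conf := fun n => x (n + 1)

/-- The metric `d(x,y) = 2^{-min{n : x n ≠ y n}}` for `x ≠ y`, and `d(x,x) = 0`. -/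
def dist01 (x y : Conf) : ℝ :=
  if x = y then 0 else ((2 : ℝ) ^ sInf {n : ℕ | x n ≠ y n})⁻¹

/-- A subshift: a nonempty, closed, shift-invariant subset of `{0,1}^ℕ`. -/
def IsSubshift (X : Set Conf) : Prop :=
  X.Nonempty ∧ IsClosed X ∧ ∀ x ∈ X, shiftMap x ∈ X

/-- The potential `φ_X(y) = -d(y, X) = -inf {d(y,x) : x ∈ X}`. -/
def phiX (X : Set Conf) (y : Conf) : ℝ := -sInf (dist01 y '' X)

/-- The cylinder set of points whose first `n` symbols form the word `w`. -/
def cylinder {n : ℕ} (w : Fin n → Bool) : Set Conf := {x | ∀ i : Fin n, x i = w i}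

/-- The entropy `H_n(μ)` of the `n`-block marginal of `μ` (base-2 logarithm). -/
def Hblock (μ : Measure Conf) (n : ℕ) : ℝ :=
  -∑ w : Fin n → Bool, (μ (cylinder w)).toReal * Real.logb 2 (μ (cylinder w)).toReal

/-- The Kolmogorov–Sinai entropy `h(μ) = lim_n H_n(μ)/n`; since the limit exists
(by subadditivity) for shift-invariant measures, we may define it as a `limsup`. -/
def entropy (μ : Measure Conf) : ℝ :=
  limsup (fun n : ℕ => Hblock μ n / n) atTop

/-- A shift-invariant Borel probability measure. -/
def IsInvProb (μ : Measure Conf) : Prop :=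
  IsProbabilityMeasure μ ∧ μ.map shiftMap = μ

/-- An equilibrium state for `βφ`: a shift-invariant Borel probability measure maximizing
`ν ↦ β∫φ dν + h(ν)` over all shift-invariant Borel probability measures. -/
def IsEquilibriumState (φ : Conf → ℝ) (β : ℝ) (μ : Measure Conf) : Prop :=
  IsInvProb μ ∧ ∀ ν : Measure Conf, IsInvProb ν →
    β * ∫ x, φ x ∂ν + entropy ν ≤ β * ∫ x, φ x ∂μ + entropy μ

/-! ### Part A: the metric and distance-to-X function -/

lemma dist01_nonneg (x y : Conf) : 0 ≤ dist01 x y := by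
  unfold dist01; split
  · exact le_refl 0
  · positivity

lemma dist01_self (y : Conf) : dist01 y y = 0 := by simp [dist01]

lemma dist01_le_of_agree {x y : Conf} {m : ℕ} (h : ∀ i < m, x i = y i) :
    dist01 x y ≤ ((2:ℝ)^m)⁻¹ := by
  unfold dist01; split
  · positivity
  · rename_i hne
    have hS : {n : ℕ | x n ≠ y n}.Nonempty := by
      by_contra hc
      exact hne (funext fun n => by
        by_contra hn
        exact hc ⟨n, hn⟩)
    have hmem := Nat.sInf_mem hS
    have hge : m ≤ sInf {n : ℕ | x n ≠ y n} := by
      by_contra hlt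
      exact hmem (h _ (lt_of_not_ge hlt))
    have : (2:ℝ)^m ≤ 2^(sInf {n : ℕ | x n ≠ y n}) :=
      pow_le_pow_right₀ one_le_two hge
    exact inv_anti₀ (by positivity) this

lemma dist01_ge_of_disagree {x y : Conf} {i : ℕ} (h : x i ≠ y i) :
    ((2:ℝ)^i)⁻¹ ≤ dist01 x y := by
  unfold dist01; split
  · rename_i he; exact absurd (congrFun he i) h
  · have hle : sInf {n : ℕ | x n ≠ y n} ≤ i := Nat.sInf_le h
    have : (2:ℝ)^(sInf {n : ℕ | x n ≠ y n}) ≤ 2^i := pow_le_pow_right₀ one_le_two hle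
    exact inv_anti₀ (by positivity) this

/-- distance to `X` -/
def DD (X : Set Conf) (y : Conf) : ℝ := sInf (dist01 y '' X)

lemma phiX_eq_neg_DD (X : Set Conf) : phiX X = fun y => -(DD X y) := rfl

lemma DD_bddBelow (X : Set Conf) (y : Conf) : BddBelow (dist01 y '' X) :=
  ⟨0, by rintro z ⟨x, -, rfl⟩; exact dist01_nonneg _ _⟩

lemma DD_nonneg {X : Set Conf} (hX : X.Nonempty) (y : Conf) : 0 ≤ DD X y :=
  le_csInf (hX.image _) (by rintro z ⟨x, -, rfl⟩; exact dist01_nonneg _ _)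

lemma DD_le {X : Set Conf} {x : Conf} (hx : x ∈ X) (y : Conf) : DD X y ≤ dist01 y x :=
  csInf_le (DD_bddBelow X y) ⟨x, hx, rfl⟩

lemma le_DD {X : Set Conf} (hX : X.Nonempty) {y : Conf} {c : ℝ}
    (h : ∀ x ∈ X, c ≤ dist01 y x) : c ≤ DD X y :=
  le_csInf (hX.image _) (by rintro z ⟨x, hx, rfl⟩; exact h x hx)

lemma DD_eq_zero_of_mem {X : Set Conf} {y : Conf} (hy : y ∈ X) : DD X y = 0 :=
  le_antisymm (by simpa [dist01_self] using DD_le hy y) (DD_nonneg ⟨y, hy⟩ y)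

lemma dist01_le_add_of_agree {y y' : Conf} {m : ℕ} (h : ∀ i < m, y' i = y i) (x : Conf) :
    dist01 y' x ≤ dist01 y x + ((2:ℝ)^m)⁻¹ := by
  rcases le_or_gt (dist01 y' x) (((2:ℝ)^m)⁻¹) with hle | hlt
  · exact hle.trans (le_add_of_nonneg_left (dist01_nonneg _ _))
  · have hne : y' ≠ x := by
      rintro rfl
      rw [dist01_self] at hlt
      have : (0:ℝ) < ((2:ℝ)^m)⁻¹ := by positivity
      linarith
    have hS : {n : ℕ | y' n ≠ x n}.Nonempty := by
      by_contra hc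
      exact hne (funext fun n => by by_contra hn; exact hc ⟨n, hn⟩)
    set j := sInf {n : ℕ | y' n ≠ x n} with hj
    have hdval : dist01 y' x = ((2:ℝ)^j)⁻¹ := by unfold dist01; rw [if_neg hne]
    have hjm : j < m := by
      by_contra hge
      have : (2:ℝ)^m ≤ 2^j := pow_le_pow_right₀ one_le_two (le_of_not_gt hge)
      have := inv_anti₀ (by positivity : (0:ℝ) < 2^m) this
      rw [hdval] at hlt; linarith
    have hmem := Nat.sInf_mem hS
    have hdis : y j ≠ x j := by
      have hyj : y' j = y j := h j hjm
      have : y' j ≠ x j := hmem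
      rw [hyj] at this; exact this
    have := dist01_ge_of_disagree hdis
    rw [hdval]
    exact le_add_of_le_of_nonneg this (by positivity)

lemma DD_le_add_of_agree {X : Set Conf} (hX : X.Nonempty) {y y' : Conf} {m : ℕ}
    (h : ∀ i < m, y' i = y i) : DD X y' ≤ DD X y + ((2:ℝ)^m)⁻¹ := by
  have : DD X y' - ((2:ℝ)^m)⁻¹ ≤ DD X y := by
    apply le_DD hX
    intro x hx
    have h1 : DD X y' ≤ dist01 y' x := DD_le hx y'
    have h2 := dist01_le_add_of_agree h x
    linarith
  linarith

lemma abs_DD_sub_le {X : Set Conf} (hX : X.Nonempty) {y y' : Conf} {m : ℕ}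
    (h : ∀ i < m, y' i = y i) : |DD X y' - DD X y| ≤ ((2:ℝ)^m)⁻¹ := by
  have h' : ∀ i < m, y i = y' i := fun i hi => (h i hi).symm
  have h1 := DD_le_add_of_agree hX h
  have h2 := DD_le_add_of_agree hX h'
  rw [abs_le]; constructor <;> linarith

lemma agreeSet_mem_nhds (y : Conf) (m : ℕ) : {y' : Conf | ∀ i < m, y' i = y i} ∈ 𝓝 y := by
  have : {y' : Conf | ∀ i < m, y' i = y i} = ⋂ i ∈ Finset.range m, (fun y' : Conf => y' i) ⁻¹' {y i} := by
    ext y'; simp [Set.mem_iInter]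
  rw [this]
  apply IsOpen.mem_nhds
  · exact isOpen_biInter_finset fun i _ => (continuous_apply i).isOpen_preimage _ trivial
  · simp

lemma continuous_DD {X : Set Conf} (hX : X.Nonempty) : Continuous (DD X) := by
  rw [continuous_iff_continuousAt]
  intro y
  rw [ContinuousAt, Metric.tendsto_nhds]
  intro ε hε
  obtain ⟨m, hm⟩ : ∃ m : ℕ, ((2:ℝ)^m)⁻¹ < ε := by
    obtain ⟨m, hm⟩ := pow_unbounded_of_one_lt ε⁻¹ (one_lt_two (α := ℝ))
    exact ⟨m, by rw [inv_lt_comm₀ (by positivity) hε]; exact hm⟩ 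
  filter_upwards [agreeSet_mem_nhds y m] with y' hy'
  rw [Real.dist_eq]
  exact lt_of_le_of_lt (abs_DD_sub_le hX hy') hm
/-! ### Part B: cylinders -/

def cylL (u : List Bool) : Set Conf := {x | ∀ i : Fin u.length, x i = u.get i}

lemma mem_cylL {u : List Bool} {x : Conf} :
    x ∈ cylL u ↔ ∀ i, (h : i < u.length) → x i = u[i] := by
  constructor
  · intro hx i h; exact hx ⟨i, h⟩
  · intro hx i; exact hx i i.isLt

lemma cylL_nil : cylL [] = Set.univ := by
  ext x; simp [mem_cylL]

lemma measurableSet_cylL (u : List Bool) : MeasurableSet (cylL u) := by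
  have : cylL u = ⋂ i : Fin u.length, (fun x : Conf => x i) ⁻¹' {u.get i} := by
    ext x; simp [cylL, Set.mem_iInter]
  rw [this]
  exact MeasurableSet.iInter fun i => (measurable_pi_apply _) (measurableSet_singleton _)

lemma isOpen_cylL (u : List Bool) : IsOpen (cylL u) := by
  have : cylL u = ⋂ i ∈ Finset.univ (α := Fin u.length),
      (fun x : Conf => x i) ⁻¹' {u.get i} := by
    ext x; simp [cylL, Set.mem_iInter]
  rw [this]
  exact isOpen_biInter_finset fun i _ => (continuous_apply (i : ℕ)).isOpen_preimage _ trivial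

lemma cylinder_eq_cylL {n : ℕ} (w : Fin n → Bool) : _root_.cylinder w = cylL (List.ofFn w) := by
  ext x
  simp only [_root_.cylinder, Set.mem_setOf_eq, mem_cylL, List.length_ofFn]
  constructor
  · intro h i hi
    rw [List.getElem_ofFn]
    exact h ⟨i, hi⟩
  · intro h i
    have := h i i.isLt
    rwa [List.getElem_ofFn] at this

lemma mem_cylL_append {u : List Bool} {b : Bool} {x : Conf} :
    x ∈ cylL (u ++ [b]) ↔ x ∈ cylL u ∧ x u.length = b := by
  simp only [mem_cylL, List.length_append, List.length_cons, List.length_nil]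
  constructor
  · intro h
    refine ⟨fun i hi => ?_, ?_⟩
    · have := h i (by omega)
      rwa [List.getElem_append_left hi] at this
    · have := h u.length (by omega)
      rw [List.getElem_append_right (le_refl _)] at this
      simpa using this
  · rintro ⟨h1, h2⟩ i hi
    rcases lt_or_ge i u.length with hlt | hge
    · rw [List.getElem_append_left hlt]; exact h1 i hlt
    · have : i = u.length := by omega
      subst this
      rw [List.getElem_append_right (le_refl _)]
      simpa using h2

lemma mem_cylL_cons {u : List Bool} {b : Bool} {x : Conf} :
    x ∈ cylL (b :: u) ↔ x 0 = b ∧ shiftMap x ∈ cylL u := by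
  simp only [mem_cylL, List.length_cons, shiftMap]
  constructor
  · intro h
    refine ⟨h 0 (by omega), fun i hi => ?_⟩
    have := h (i+1) (by omega)
    simpa using this
  · rintro ⟨h0, h1⟩ i hi
    cases i with
    | zero => simpa using h0
    | succ j => simpa using h1 j (by omega)

lemma shift_preimage_cylL (u : List Bool) :
    shiftMap ⁻¹' (cylL u) = cylL (false :: u) ∪ cylL (true :: u) := by
  ext x
  simp only [Set.mem_preimage, Set.mem_union, mem_cylL_cons]
  cases h : x 0 <;> simp [h]

lemma disjoint_cylL_cons (u v : List Bool) :
    Disjoint (cylL (false :: u)) (cylL (true :: v)) := by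
  rw [Set.disjoint_left]
  intro x hx hx'
  have h1 := (mem_cylL_cons.1 hx).1
  have h2 := (mem_cylL_cons.1 hx').1
  rw [h1] at h2; exact Bool.false_ne_true h2

lemma cylL_subset_of_agree {u v : List Bool} (hlen : u.length ≤ v.length)
    (hag : ∀ i, (h : i < u.length) → u[i] = v[i]'(lt_of_lt_of_le h hlen)) :
    cylL v ⊆ cylL u := by
  intro x hx
  rw [mem_cylL] at hx ⊢
  intro i hi
  rw [hag i hi]
  exact hx i (lt_of_lt_of_le hi hlen)

lemma isPiSystem_cylL : IsPiSystem (Set.range cylL) := by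
  rintro s ⟨u, rfl⟩ t ⟨v, rfl⟩ hne
  obtain ⟨x, hxu, hxv⟩ := hne
  rcases le_total u.length v.length with hle | hle
  · have : cylL v ⊆ cylL u := cylL_subset_of_agree hle (fun i hi => by
      rw [← mem_cylL.1 hxu i hi, ← mem_cylL.1 hxv i (lt_of_lt_of_le hi hle)])
    exact ⟨v, by rw [Set.inter_eq_right.2 this]⟩
  · have : cylL u ⊆ cylL v := cylL_subset_of_agree hle (fun i hi => by
      rw [← mem_cylL.1 hxv i hi, ← mem_cylL.1 hxu i (lt_of_lt_of_le hi hle)])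
    exact ⟨u, by rw [Set.inter_eq_left.2 this]⟩

lemma eval_preimage_mem_generateFrom (i : ℕ) (b : Bool) :
    MeasurableSet[MeasurableSpace.generateFrom (Set.range cylL)]
      ((fun x : Conf => x i) ⁻¹' {b}) := by
  have heq : (fun x : Conf => x i) ⁻¹' {b} =
      ⋃ u ∈ {u : List Bool | ∃ h : i < u.length, u[i] = b}, cylL u := by
    ext x
    simp only [Set.mem_preimage, Set.mem_singleton_iff, Set.mem_iUnion, Set.mem_setOf_eq]
    constructor
    · intro hx
      have hlen : i < (List.ofFn (fun j : Fin (i+1) => x j)).length := by simp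
      refine ⟨List.ofFn (fun j : Fin (i+1) => x j),
        ⟨⟨hlen, by rw [List.getElem_ofFn]; exact hx⟩, ?_⟩⟩
      rw [mem_cylL]
      intro j hj
      rw [List.getElem_ofFn]
    · rintro ⟨u, ⟨hi, hb⟩, hx⟩
      rw [← hb]
      exact mem_cylL.1 hx i hi
  rw [heq]
  exact MeasurableSet.biUnion (Set.to_countable _)
    (fun u _ => MeasurableSpace.measurableSet_generateFrom ⟨u, rfl⟩)

lemma generateFrom_cylL :
    (inferInstance : MeasurableSpace Conf) = MeasurableSpace.generateFrom (Set.range cylL) := by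
  apply le_antisymm
  · rw [show (inferInstance : MeasurableSpace Conf) = MeasurableSpace.pi from rfl]
    apply iSup_le
    intro i
    rw [← measurable_iff_comap_le]
    intro t _
    have : (fun x : Conf => x i) ⁻¹' t = ⋃ b ∈ t, (fun x : Conf => x i) ⁻¹' {b} := by
      ext x; simp
    rw [this]
    exact MeasurableSet.biUnion (Set.to_countable _)
      (fun b _ => eval_preimage_mem_generateFrom i b)
  · apply MeasurableSpace.generateFrom_le
    rintro s ⟨u, rfl⟩
    exact measurableSet_cylL u

lemma measure_ext_cylL {μ₁ μ₂ : Measure Conf} [IsFiniteMeasure μ₁]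
    (h : ∀ u : List Bool, μ₁ (cylL u) = μ₂ (cylL u)) : μ₁ = μ₂ := by
  apply MeasureTheory.ext_of_generate_finite _ generateFrom_cylL isPiSystem_cylL
  · rintro s ⟨u, rfl⟩; exact h u
  · have := h []
    rwa [cylL_nil] at this

/-! partitions by cylinders of fixed length -/

lemma iUnion_cylinder (n : ℕ) : ⋃ w : Fin n → Bool, _root_.cylinder w = Set.univ := by
  ext x
  simp only [Set.mem_iUnion, Set.mem_univ, iff_true, _root_.cylinder, Set.mem_setOf_eq]
  exact ⟨fun i => x i, fun i => rfl⟩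

lemma pairwise_disjoint_cylinder (n : ℕ) :
    Pairwise (Function.onFun Disjoint (fun w : Fin n → Bool => _root_.cylinder w)) := by
  intro w w' hne
  rw [Function.onFun, Set.disjoint_left]
  intro x hx hx'
  exact hne (funext fun i => by rw [← hx i, ← hx' i])

lemma measurableSet_cylinder {n : ℕ} (w : Fin n → Bool) : MeasurableSet (_root_.cylinder w) := by
  rw [cylinder_eq_cylL]; exact measurableSet_cylL _

lemma sum_measure_cylinder (μ : Measure Conf) [IsProbabilityMeasure μ] (n : ℕ) :
    ∑ w : Fin n → Bool, μ (_root_.cylinder w) = 1 := by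
  rw [← tsum_fintype (L := .unconditional _), ← measure_iUnion (pairwise_disjoint_cylinder n)
    (fun w => measurableSet_cylinder w), iUnion_cylinder, measure_univ]

lemma sum_toReal_measure_cylinder (μ : Measure Conf) [IsProbabilityMeasure μ] (n : ℕ) :
    ∑ w : Fin n → Bool, (μ (_root_.cylinder w)).toReal = 1 := by
  rw [← ENNReal.toReal_sum (fun w _ => measure_ne_top μ _), sum_measure_cylinder, ENNReal.toReal_one]
/-! ### Part C: entropy bounds and the basic inequality -/

lemma toReal_mem_01 (μ : Measure Conf) [IsProbabilityMeasure μ] (s : Set Conf) :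
    (μ s).toReal ∈ Set.Icc (0:ℝ) 1 := by
  constructor
  · exact ENNReal.toReal_nonneg
  · rw [← ENNReal.toReal_one]
    exact ENNReal.toReal_mono ENNReal.one_ne_top prob_le_one

lemma Hblock_nonneg (μ : Measure Conf) [IsProbabilityMeasure μ] (n : ℕ) : 0 ≤ Hblock μ n := by
  rw [Hblock, neg_nonneg]
  apply Finset.sum_nonpos
  intro w _
  obtain ⟨h0, h1⟩ := toReal_mem_01 μ (_root_.cylinder w)
  rcases eq_or_lt_of_le h0 with he | hp
  · rw [← he]; simp
  · exact mul_nonpos_of_nonneg_of_nonpos h0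
      (Real.logb_nonpos one_lt_two h0 h1)

lemma negMulLog_const_mul {c p : ℝ} (hc : 0 < c) (hp : 0 ≤ p) :
    Real.negMulLog (c * p) = c * Real.negMulLog p - c * p * Real.log c := by
  rcases eq_or_lt_of_le hp with he | hp
  · rw [← he]; simp [Real.negMulLog]
  · rw [Real.negMulLog, Real.negMulLog, Real.log_mul (ne_of_gt hc) (ne_of_gt hp)]
    ring

lemma Hblock_le (μ : Measure Conf) [IsProbabilityMeasure μ] (n : ℕ) : Hblock μ n ≤ n := by
  classical
  set p : (Fin n → Bool) → ℝ := fun w => (μ (_root_.cylinder w)).toReal with hp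
  have hp0 : ∀ w, 0 ≤ p w := fun w => ENNReal.toReal_nonneg
  have hsum : ∑ w, p w = 1 := sum_toReal_measure_cylinder μ n
  have hcard : (Fintype.card (Fin n → Bool) : ℝ) = 2^n := by
    simp [Fintype.card_fun]
  have hNpos : (0:ℝ) < 2^n := by positivity
  -- Jensen
  have hjen := Real.concaveOn_negMulLog.le_map_sum (t := Finset.univ)
    (w := fun _ : Fin n → Bool => ((2:ℝ)^n)⁻¹) (p := fun w => (2:ℝ)^n * p w)
    (fun i _ => by positivity)
    (by
      rw [Finset.sum_const, Finset.card_univ, nsmul_eq_mul, ← hcard]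
      field_simp)
    (fun i _ => Set.mem_Ici.2 (by have := hp0 i; positivity))
  have hrhs : ∑ w : Fin n → Bool, ((2:ℝ)^n)⁻¹ • ((2:ℝ)^n * p w) = 1 := by
    simp only [smul_eq_mul, ← mul_assoc, inv_mul_cancel₀ (ne_of_gt hNpos), one_mul]
    exact hsum
  rw [hrhs] at hjen
  simp only [smul_eq_mul, Real.negMulLog_one] at hjen
  have hterm : ∀ w : Fin n → Bool, ((2:ℝ)^n)⁻¹ * Real.negMulLog ((2:ℝ)^n * p w)
      = Real.negMulLog (p w) - p w * Real.log ((2:ℝ)^n) := by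
    intro w
    rw [negMulLog_const_mul hNpos (hp0 w)]
    field_simp
  rw [Finset.sum_congr rfl (fun w _ => hterm w), Finset.sum_sub_distrib,
    ← Finset.sum_mul, hsum, one_mul] at hjen
  -- now: ∑ negMulLog (p w) - log (2^n) ≤ 0
  have hkey : ∑ w : Fin n → Bool, Real.negMulLog (p w) ≤ (n : ℝ) * Real.log 2 := by
    rw [Real.log_pow] at hjen
    linarith
  have hH : Hblock μ n = (∑ w : Fin n → Bool, Real.negMulLog (p w)) / Real.log 2 := by
    rw [Hblock, ← Finset.sum_neg_distrib, Finset.sum_div]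
    apply Finset.sum_congr rfl
    intro w _
    rw [Real.logb, Real.negMulLog]
    field_simp
    rfl
  rw [hH, div_le_iff₀ (Real.log_pos one_lt_two)]
  exact hkey

lemma entropy_nonneg (μ : Measure Conf) [IsProbabilityMeasure μ] : 0 ≤ entropy μ := by
  have hub : ∀ m : ℕ, Hblock μ m / m ≤ 1 := by
    intro m
    rcases Nat.eq_zero_or_pos m with rfl | hm
    · simp
    · rw [div_le_one (by positivity)]
      exact Hblock_le μ m
  apply Filter.le_limsup_of_frequently_le
  · apply Filter.Frequently.of_forall
    intro m
    rcases Nat.eq_zero_or_pos m with rfl | hm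
    · simp
    · exact div_nonneg (Hblock_nonneg μ m) (Nat.cast_nonneg m)
  · exact ⟨1, Filter.eventually_map.2 (Filter.Eventually.of_forall hub)⟩

lemma entropy_le_one (μ : Measure Conf) [IsProbabilityMeasure μ] : entropy μ ≤ 1 := by
  have hub : ∀ m : ℕ, Hblock μ m / m ≤ 1 := by
    intro m
    rcases Nat.eq_zero_or_pos m with rfl | hm
    · simp
    · rw [div_le_one (by positivity)]
      exact Hblock_le μ m
  have hlb : ∀ m : ℕ, (0:ℝ) ≤ Hblock μ m / m := by
    intro m
    rcases Nat.eq_zero_or_pos m with rfl | hm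
    · simp
    · exact div_nonneg (Hblock_nonneg μ m) (Nat.cast_nonneg m)
  apply Filter.limsup_le_of_le
  · exact Filter.isCoboundedUnder_le_of_eventually_le (atTop : Filter ℕ) (Filter.Eventually.of_forall hlb)
  · exact Filter.Eventually.of_forall hub
/-! ### Part D: basic inequality and approximation tools -/

lemma integrable_of_continuous {f : Conf → ℝ} (hf : Continuous f) (μ : Measure Conf)
    [IsFiniteMeasure μ] : Integrable f μ := by
  have := BoundedContinuousFunction.integrable μ
    (BoundedContinuousFunction.mkOfCompact ⟨f, hf⟩)
  exact this

lemma integral_phiX_eq_zero {X : Set Conf} (hX : IsSubshift X) {ν : Measure Conf}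
    (hνX : ν X = 1) [IsProbabilityMeasure ν] : ∫ y, phiX X y ∂ν = 0 := by
  apply integral_eq_zero_of_ae
  have hcompl : ν Xᶜ = 0 := by
    rw [measure_compl hX.2.1.measurableSet (measure_ne_top ν X), hνX, measure_univ]
    simp
  have hsub : {y | ¬ phiX X y = 0} ⊆ Xᶜ := by
    intro y hy hyX
    exact hy (by rw [phiX_eq_neg_DD]; simp [DD_eq_zero_of_mem hyX])
  rw [Filter.EventuallyEq, ae_iff]
  exact measure_mono_null (by simpa using hsub) hcompl

lemma integral_DD_le_inv {X : Set Conf} (hX : IsSubshift X) {ν : Measure Conf}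
    (hν : IsInvProb ν) (hνX : ν X = 1) {β : ℝ} (hβ : 0 < β) {μβ : Measure Conf}
    (hμβ : IsEquilibriumState (phiX X) β μβ) : ∫ y, DD X y ∂μβ ≤ 1/β := by
  haveI := hν.1
  haveI := hμβ.1.1
  have key := hμβ.2 ν hν
  rw [integral_phiX_eq_zero hX hνX] at key
  have hμphi : ∫ y, phiX X y ∂μβ = -∫ y, DD X y ∂μβ := by
    rw [phiX_eq_neg_DD, integral_neg]
  rw [hμphi] at key
  have e1 : 0 ≤ entropy ν := entropy_nonneg ν
  have e2 : entropy μβ ≤ 1 := entropy_le_one μβ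
  rw [mul_neg] at key
  have hβI : β * ∫ y, DD X y ∂μβ ≤ 1 := by linarith
  rw [le_div_iff₀ hβ, mul_comm]
  exact hβI

lemma measure_cylL_le {X : Set Conf} (hX : IsSubshift X) {u : List Bool}
    (hu : cylL u ∩ X = ∅) {μ : Measure Conf} [IsProbabilityMeasure μ] {c : ℝ}
    (hI : ∫ y, DD X y ∂μ ≤ c) : (μ (cylL u)).toReal ≤ 2^u.length * c := by
  have hXne := hX.1
  have hDcont := continuous_DD (X := X) hXne
  have hint : Integrable (DD X) μ := integrable_of_continuous hDcont μ
  have hlow : ∀ y ∈ cylL u, ((2:ℝ)^u.length)⁻¹ ≤ DD X y := by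
    intro y hy
    apply le_DD hXne
    intro x hxX
    have hxnot : x ∉ cylL u := by
      intro hx
      exact absurd (Set.mem_inter hx hxX) (by rw [hu]; exact Set.notMem_empty x)
    rw [mem_cylL] at hxnot
    push_neg at hxnot
    obtain ⟨i, hi, hne⟩ := hxnot
    have hyi : y i = u[i] := mem_cylL.1 hy i hi
    have hdis : y i ≠ x i := by rw [hyi]; exact fun h => hne h.symm
    have h1 := dist01_ge_of_disagree hdis
    have h2 : ((2:ℝ)^u.length)⁻¹ ≤ ((2:ℝ)^i)⁻¹ := by
      apply inv_anti₀ (by positivity)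
      exact pow_le_pow_right₀ one_le_two hi.le
    exact h2.trans h1
  have hset := setIntegral_ge_of_const_le (measurableSet_cylL u) (measure_ne_top μ _)
    hlow hint.integrableOn
  have hle := setIntegral_le_integral (s := cylL u) hint
    (Filter.Eventually.of_forall (fun y => DD_nonneg hXne y))
  have h2 : (0:ℝ) < 2^u.length := by positivity
  have hchain : ((2:ℝ)^u.length)⁻¹ * (μ (cylL u)).toReal ≤ c := le_trans (by rw [smul_eq_mul, mul_comm] at hset; exact hset) (hle.trans hI)
  calc (μ (cylL u)).toReal = 2^u.length * (((2:ℝ)^u.length)⁻¹ * (μ (cylL u)).toReal) := by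
        field_simp
    _ ≤ 2^u.length * c := by
        exact mul_le_mul_of_nonneg_left hchain h2.le

lemma isOpen_agreeSet (x : Conf) (m : ℕ) : IsOpen {y : Conf | ∀ i < m, y i = x i} := by
  have : {y : Conf | ∀ i < m, y i = x i} = ⋂ i ∈ Finset.range m, (fun y : Conf => y i) ⁻¹' {x i} := by
    ext y; simp [Set.mem_iInter]
  rw [this]
  exact isOpen_biInter_finset fun i _ => (continuous_apply i).isOpen_preimage _ trivial

lemma exists_cyl_nbhd {V : Set Conf} {x : Conf} (hV : V ∈ 𝓝 x) :
    ∃ m : ℕ, ∀ y : Conf, (∀ i < m, y i = x i) → y ∈ V := by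
  obtain ⟨O, hOV, hOopen, hxO⟩ := mem_nhds_iff.1 hV
  obtain ⟨I, u, h1, h2⟩ := (isOpen_pi_iff.1 hOopen) x hxO
  refine ⟨I.sup id + 1, fun y hy => hOV (h2 ?_)⟩
  intro a ha
  have : y a = x a := hy a (Nat.lt_succ_of_le (Finset.le_sup (f := id) ha))
  rw [this]
  exact (h1 a ha).2

lemma exists_uniform_cylinder_approx (f : C(Conf, ℝ)) {ε : ℝ} (hε : 0 < ε) :
    ∃ m : ℕ, ∀ x y : Conf, (∀ i < m, x i = y i) → |f x - f y| ≤ ε := by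
  have hx : ∀ x : Conf, ∃ m : ℕ, ∀ y : Conf, (∀ i < m, y i = x i) → |f y - f x| < ε/2 := by
    intro x
    have hV : f ⁻¹' Metric.ball (f x) (ε/2) ∈ 𝓝 x :=
      f.continuous.continuousAt (Metric.ball_mem_nhds _ (by linarith))
    obtain ⟨m, hm⟩ := exists_cyl_nbhd hV
    exact ⟨m, fun y hy => by simpa [Real.dist_eq] using hm y hy⟩
  choose M hM using hx
  have hcover : (Set.univ : Set Conf) ⊆ ⋃ x : Conf, {y : Conf | ∀ i < M x, y i = x i} :=
    fun x _ => Set.mem_iUnion.2 ⟨x, fun i _ => rfl⟩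
  obtain ⟨t, ht⟩ := isCompact_univ.elim_finite_subcover
    (fun x : Conf => {y : Conf | ∀ i < M x, y i = x i}) (fun x => isOpen_agreeSet x (M x)) hcover
  refine ⟨t.sup M, fun x y hxy => ?_⟩
  obtain ⟨z, hz, hxz⟩ : ∃ z ∈ t, x ∈ {y : Conf | ∀ i < M z, y i = z i} := by
    have := ht (Set.mem_univ x)
    simpa using this
  have hyz : y ∈ {y : Conf | ∀ i < M z, y i = z i} := by
    intro i hi
    rw [← hxy i (lt_of_lt_of_le hi (Finset.le_sup hz))]
    exact hxz i hi
  have h1 := hM z x hxz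
  have h2 := hM z y hyz
  have : |f x - f y| ≤ |f x - f z| + |f y - f z| := by
    rw [abs_sub_comm (f y) (f z)]
    exact abs_sub_le _ _ _
  linarith
/-! ### Part F: constructing a measure from consistent cylinder weights -/

def ellAux (p : List Bool → ℝ) : List Bool → ℝ
  | [] => 0
  | b :: r => ellAux p r + if b then p (r.reverse ++ [false]) else 0

def ell (p : List Bool → ℝ) (w : List Bool) : ℝ := ellAux p w.reverse

def qpref (p : List Bool → ℝ) (t : ℝ) : ℕ → List Bool
  | 0 => []
  | n+1 => qpref p t n ++ [decide (ell p (qpref p t n) + p (qpref p t n ++ [false]) ≤ t)]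

def qmap (p : List Bool → ℝ) (t : ℝ) : Conf := fun n =>
  decide (ell p (qpref p t n) + p (qpref p t n ++ [false]) ≤ t)

section Quantile

variable {p : List Bool → ℝ}

lemma ell_nil : ell p [] = 0 := rfl

lemma ell_concat (u : List Bool) (b : Bool) :
    ell p (u ++ [b]) = ell p u + if b then p (u ++ [false]) else 0 := by
  unfold ell
  rw [List.reverse_append]
  simp [ellAux, List.reverse_reverse]

lemma qpref_succ (t : ℝ) (n : ℕ) :
    qpref p t (n+1) = qpref p t n ++ [qmap p t n] := rfl

lemma qpref_length (t : ℝ) (n : ℕ) : (qpref p t n).length = n := by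
  induction n with
  | zero => rfl
  | succ n ih => rw [qpref_succ, List.length_append, ih]; simp

variable (h0 : ∀ u, 0 ≤ p u) (hadd : ∀ u, p (u ++ [false]) + p (u ++ [true]) = p u)
  (h1 : p [] = 1)

include h0 hadd h1 in
lemma mem_qpref {t : ℝ} (ht : t ∈ Set.Ico (0:ℝ) 1) (n : ℕ) :
    ell p (qpref p t n) ≤ t ∧ t < ell p (qpref p t n) + p (qpref p t n) := by
  induction n with
  | zero =>
    simpa [qpref, ell_nil, h1] using ht
  | succ n ih =>
    obtain ⟨ih1, ih2⟩ := ih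
    set u := qpref p t n with hu
    have hadd' := hadd u
    by_cases hc : ell p u + p (u ++ [false]) ≤ t
    · have hb : qmap p t n = true := decide_eq_true hc
      rw [qpref_succ, hb, ell_concat]
      simp only [if_true]
      constructor
      · exact hc
      · linarith
    · have hb : qmap p t n = false := decide_eq_false hc
      rw [qpref_succ, hb, ell_concat]
      simp only [Bool.false_eq_true, if_false, add_zero]
      push_neg at hc
      constructor
      · exact ih1
      · linarith

include h0 hadd in
lemma ell_concat_bounds (v : List Bool) (b : Bool) :
    ell p v ≤ ell p (v ++ [b]) ∧
    ell p (v ++ [b]) + p (v ++ [b]) ≤ ell p v + p v := by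
  have hadd' := hadd v
  have h0' := h0 (v ++ [false])
  have h0'' := h0 (v ++ [true])
  cases b with
  | false =>
    rw [ell_concat]
    simp only [Bool.false_eq_true, if_false, add_zero]
    exact ⟨le_refl _, by linarith⟩
  | true =>
    rw [ell_concat]
    simp only [if_true]
    exact ⟨by linarith, by linarith⟩

include h0 hadd h1 in
lemma Iu_subset (u : List Bool) :
    Set.Ico (ell p u) (ell p u + p u) ⊆ Set.Ico (0:ℝ) 1 := by
  induction u using List.reverseRecOn with
  | nil =>
    rw [ell_nil, h1]
    simp
  | append_singleton v b ih =>
    obtain ⟨hl, hr⟩ := ell_concat_bounds h0 hadd v b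
    intro t ⟨ht1, ht2⟩
    exact ih ⟨le_trans hl ht1, lt_of_lt_of_le ht2 hr⟩

include h0 hadd h1 in
lemma qpref_eq_of_mem (u : List Bool) {t : ℝ}
    (hl : ell p u ≤ t) (hr : t < ell p u + p u) :
    qpref p t u.length = u := by
  induction u using List.reverseRecOn with
  | nil => rfl
  | append_singleton v b ih =>
    have hb := ell_concat_bounds h0 hadd v b
    have hvl : ell p v ≤ t := le_trans hb.1 hl
    have hvr : t < ell p v + p v := lt_of_lt_of_le hr hb.2
    have hv := ih hvl hvr
    have hlen : (v ++ [b]).length = v.length + 1 := by simp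
    rw [hlen, qpref_succ, hv]
    congr 1
    have hadd' := hadd v
    cases b with
    | false =>
      have : ¬ (ell p v + p (v ++ [false]) ≤ t) := by
        rw [ell_concat] at hr
        simp at hr
        push_neg
        linarith
      simp [qmap, hv, this]
    | true =>
      have : ell p v + p (v ++ [false]) ≤ t := by
        rw [ell_concat] at hl
        simp at hl
        linarith
      simp [qmap, hv, this]

lemma qpref_eq_ofFn (t : ℝ) (n : ℕ) :
    qpref p t n = List.ofFn (fun i : Fin n => qmap p t i) := by
  induction n with
  | zero => rfl
  | succ n ih =>
    rw [qpref_succ, ih, List.ofFn_succ']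
    simp [List.concat_eq_append]

lemma qpref_getElem (t : ℝ) (n : ℕ) (i : ℕ) (hi : i < n) :
    (qpref p t n)[i]'(by rw [qpref_length]; exact hi) = qmap p t i := by
  induction n with
  | zero => omega
  | succ n ih =>
    have hsucc := qpref_succ (p := p) t n
    rcases lt_or_ge i n with hlt | hge
    · rw [List.getElem_of_eq hsucc, List.getElem_append_left (by rw [qpref_length]; exact hlt)]
      exact ih hlt
    · have hin : i = n := by omega
      subst hin
      rw [List.getElem_of_eq hsucc, List.getElem_append_right (by rw [qpref_length])]
      simp [qpref_length]

lemma qmap_mem_cylL_iff (t : ℝ) (u : List Bool) :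
    qmap p t ∈ cylL u ↔ qpref p t u.length = u := by
  constructor
  · intro h
    apply List.ext_getElem (by rw [qpref_length])
    intro i h1 h2
    rw [qpref_getElem t u.length i (by rwa [qpref_length] at h1)]
    exact mem_cylL.1 h i h2
  · intro h
    rw [mem_cylL]
    intro i hi
    rw [List.getElem_of_eq h.symm hi]
    exact (qpref_getElem t u.length i hi).symm

include h0 hadd h1 in
lemma qmap_preimage_cylL (u : List Bool) :
    (qmap p ⁻¹' cylL u) ∩ Set.Ico (0:ℝ) 1 = Set.Ico (ell p u) (ell p u + p u) := by
  ext t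
  constructor
  · rintro ⟨hq, ht⟩
    rw [Set.mem_preimage, qmap_mem_cylL_iff] at hq
    have := mem_qpref h0 hadd h1 ht u.length
    rw [hq] at this
    exact this
  · intro ht
    have htI : t ∈ Set.Ico (0:ℝ) 1 := Iu_subset h0 hadd h1 u ht
    refine ⟨?_, htI⟩
    rw [Set.mem_preimage, qmap_mem_cylL_iff]
    exact qpref_eq_of_mem h0 hadd h1 u ht.1 ht.2

lemma measurableSet_qpref_eq (n : ℕ) (u : List Bool) :
    MeasurableSet {t : ℝ | qpref p t n = u} := by
  induction n generalizing u with
  | zero =>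
    rcases List.eq_nil_or_concat u with rfl | ⟨v, b, rfl⟩
    · simp only [qpref]
      exact MeasurableSet.univ
    · have : {t : ℝ | qpref p t 0 = v.concat b} = ∅ := by
        ext t
        simp only [qpref, Set.mem_setOf_eq, Set.mem_empty_iff_false, iff_false]
        intro h
        exact absurd (congrArg List.length h) (by simp)
      rw [this]; exact MeasurableSet.empty
  | succ n ih =>
    rcases List.eq_nil_or_concat u with rfl | ⟨v, b, rfl⟩
    · have : {t : ℝ | qpref p t (n+1) = []} = ∅ := by
        ext t
        simp only [qpref_succ, Set.mem_setOf_eq, Set.mem_empty_iff_false, iff_false]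
        intro h
        exact absurd (congrArg List.length h) (by simp)
      rw [this]; exact MeasurableSet.empty
    · have heq : {t : ℝ | qpref p t (n+1) = v.concat b} =
          {t : ℝ | qpref p t n = v} ∩
          {t : ℝ | decide (ell p v + p (v ++ [false]) ≤ t) = b} := by
        ext t
        simp only [Set.mem_setOf_eq, Set.mem_inter_iff, List.concat_eq_append, qpref_succ]
        constructor
        · intro h
          have hlen : (qpref p t n).length = v.length := by
            have := congrArg List.length h
            simp [qpref_length] at this
            simpa [qpref_length] using this
          obtain ⟨h1', h2'⟩ := List.append_inj h hlen
          refine ⟨h1', ?_⟩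
          have : qmap p t n = b := by simpa using h2'
          rw [← this, qmap, h1']
        · rintro ⟨h1', h2'⟩
          rw [h1']
          congr 1
          rw [show qmap p t n = decide (ell p v + p (v ++ [false]) ≤ t) from by rw [qmap, h1'], h2']
      rw [heq]
      apply (ih v).inter
      have : {t : ℝ | decide (ell p v + p (v ++ [false]) ≤ t) = b} =
          if b then Set.Ici (ell p v + p (v ++ [false])) else Set.Iio (ell p v + p (v ++ [false])) := by
        cases b <;> ext t <;> simp [Set.mem_Ici, Set.mem_Iio, not_le]
      rw [this]
      split
      · exact measurableSet_Ici
      · exact measurableSet_Iio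

lemma measurable_qmap : Measurable (qmap p) := by
  rw [measurable_pi_iff]
  intro n
  have key : MeasurableSet {t : ℝ | qmap p t n = true} := by
    have : {t : ℝ | qmap p t n = true} =
        ⋃ u : List Bool, ({t : ℝ | qpref p t n = u} ∩ Set.Ici (ell p u + p (u ++ [false]))) := by
      ext t
      simp only [Set.mem_setOf_eq, Set.mem_iUnion, Set.mem_inter_iff, Set.mem_Ici]
      constructor
      · intro h
        exact ⟨qpref p t n, rfl, by simpa [qmap] using h⟩
      · rintro ⟨u, hu, hle⟩
        rw [qmap, hu]
        simpa using hle
    rw [this]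
    exact MeasurableSet.iUnion fun u => (measurableSet_qpref_eq n u).inter measurableSet_Ici
  intro s _
  have : (fun t => qmap p t n) ⁻¹' s = ⋃ b ∈ s, (fun t => qmap p t n) ⁻¹' {b} := by
    ext t; simp
  rw [this]
  apply MeasurableSet.biUnion (Set.to_countable _)
  intro b _
  cases b
  · have : (fun t => qmap p t n) ⁻¹' {false} = {t : ℝ | qmap p t n = true}ᶜ := by
      ext t; simp
    rw [this]; exact key.compl
  · exact key

/-- The measure built from cylinder weights. -/
def QM (p : List Bool → ℝ) : Measure Conf :=
  Measure.map (qmap p) (volume.restrict (Set.Ico (0:ℝ) 1))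

include h0 hadd h1 in
lemma QM_cylL (u : List Bool) : QM p (cylL u) = ENNReal.ofReal (p u) := by
  rw [QM, Measure.map_apply measurable_qmap (measurableSet_cylL u),
    Measure.restrict_apply (measurable_qmap (measurableSet_cylL u)),
    qmap_preimage_cylL h0 hadd h1, Real.volume_Ico]
  congr 1
  ring

end Quantile
/-! ### Part G: limit extraction and identification -/

lemma measurable_shiftMap : Measurable shiftMap := by
  apply Continuous.measurable
  exact continuous_pi fun n => continuous_apply (n + 1)

lemma cylL_eq_union_append (u : List Bool) :
    cylL u = cylL (u ++ [false]) ∪ cylL (u ++ [true]) := by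
  ext x
  simp only [Set.mem_union, mem_cylL_append]
  constructor
  · intro h
    cases hb : x u.length
    · exact Or.inl ⟨h, rfl⟩
    · exact Or.inr ⟨h, rfl⟩
  · rintro (⟨h, -⟩ | ⟨h, -⟩) <;> exact h

lemma disjoint_cylL_append (u : List Bool) :
    Disjoint (cylL (u ++ [false])) (cylL (u ++ [true])) := by
  rw [Set.disjoint_left]
  intro x hx hx'
  have h1 := (mem_cylL_append.1 hx).2
  have h2 := (mem_cylL_append.1 hx').2
  rw [h1] at h2
  exact Bool.false_ne_true h2

lemma measure_cylL_split (μ : Measure Conf) [IsFiniteMeasure μ] (u : List Bool) :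
    (μ (cylL u)).toReal = (μ (cylL (u ++ [false]))).toReal + (μ (cylL (u ++ [true]))).toReal := by
  rw [cylL_eq_union_append u, measure_union (disjoint_cylL_append u) (measurableSet_cylL _),
    ENNReal.toReal_add (measure_ne_top μ _) (measure_ne_top μ _)]

lemma measure_cylL_shift (μ : Measure Conf) [IsFiniteMeasure μ] (hinv : μ.map shiftMap = μ)
    (u : List Bool) :
    (μ (cylL u)).toReal =
      (μ (cylL (false :: u))).toReal + (μ (cylL (true :: u))).toReal := by
  conv_lhs => rw [← hinv]
  rw [Measure.map_apply measurable_shiftMap (measurableSet_cylL u), shift_preimage_cylL,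
    measure_union (disjoint_cylL_cons u u) (measurableSet_cylL _),
    ENNReal.toReal_add (measure_ne_top μ _) (measure_ne_top μ _)]

lemma key_subseq {X : Set Conf} (hX : IsSubshift X) {ν : Measure Conf} (hν : IsInvProb ν)
    (hνX : ν X = 1)
    (huniq : ∀ ν' : Measure Conf, IsInvProb ν' → ν' X = 1 → ν' = ν)
    (m : ℕ → Measure Conf) (hm : ∀ k, IsInvProb (m k))
    (hD : Tendsto (fun k => ∫ y, DD X y ∂(m k)) atTop (𝓝 0)) :
    ∃ ms : ℕ → ℕ, StrictMono ms ∧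
      ∀ u : List Bool, Tendsto (fun n => (m (ms n) (cylL u)).toReal) atTop
        (𝓝 ((ν (cylL u)).toReal)) := by
  haveI : ∀ k, IsProbabilityMeasure (m k) := fun k => (hm k).1
  set G : ℕ → (List Bool → ℝ) := fun k u => (m k (cylL u)).toReal with hG
  have hGs : ∀ k, G k ∈ Set.pi Set.univ (fun _ : List Bool => Set.Icc (0:ℝ) 1) := by
    intro k u _
    exact toReal_mem_01 (m k) (cylL u)
  obtain ⟨g, hgs, ms, hmono, hconv⟩ :=
    (isCompact_univ_pi (fun _ : List Bool => isCompact_Icc)).tendsto_subseq hGs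
  have hpt : ∀ u, Tendsto (fun n => (m (ms n) (cylL u)).toReal) atTop (𝓝 (g u)) := by
    intro u
    exact (tendsto_pi_nhds.1 hconv) u
  have h0 : ∀ u, 0 ≤ g u := fun u => (hgs u (Set.mem_univ u)).1
  have h1 : g [] = 1 := by
    have hconst : ∀ n, (m (ms n) (cylL [])).toReal = 1 := by
      intro n
      rw [cylL_nil, measure_univ, ENNReal.toReal_one]
    have := hpt []
    rw [show (fun n => (m (ms n) (cylL [])).toReal) = fun _ => (1:ℝ) from funext hconst] at this
    exact (tendsto_nhds_unique tendsto_const_nhds this).symm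
  have hadd : ∀ u, g (u ++ [false]) + g (u ++ [true]) = g u := by
    intro u
    have h1' := (hpt (u ++ [false])).add (hpt (u ++ [true]))
    have h2' : ∀ n, (m (ms n) (cylL (u ++ [false]))).toReal
        + (m (ms n) (cylL (u ++ [true]))).toReal = (m (ms n) (cylL u)).toReal :=
      fun n => (measure_cylL_split (m (ms n)) u).symm
    rw [show (fun n => (m (ms n) (cylL (u ++ [false]))).toReal
        + (m (ms n) (cylL (u ++ [true]))).toReal)
        = fun n => (m (ms n) (cylL u)).toReal from funext h2'] at h1'
    exact tendsto_nhds_unique h1' (hpt u)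
  have hshift : ∀ u, g (false :: u) + g (true :: u) = g u := by
    intro u
    have h1' := (hpt (false :: u)).add (hpt (true :: u))
    have h2' : ∀ n, (m (ms n) (cylL (false :: u))).toReal
        + (m (ms n) (cylL (true :: u))).toReal = (m (ms n) (cylL u)).toReal :=
      fun n => (measure_cylL_shift (m (ms n)) (hm (ms n)).2 u).symm
    rw [show (fun n => (m (ms n) (cylL (false :: u))).toReal
        + (m (ms n) (cylL (true :: u))).toReal)
        = fun n => (m (ms n) (cylL u)).toReal from funext h2'] at h1'
    exact tendsto_nhds_unique h1' (hpt u)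
  have hvan : ∀ u : List Bool, cylL u ∩ X = ∅ → g u = 0 := by
    intro u hu
    have hub : ∀ n, (m (ms n) (cylL u)).toReal ≤ 2^u.length * ∫ y, DD X y ∂(m (ms n)) :=
      fun n => measure_cylL_le hX hu (le_refl _)
    have hDms : Tendsto (fun n => ∫ y, DD X y ∂(m (ms n))) atTop (𝓝 0) :=
      hD.comp hmono.tendsto_atTop
    have hconst : Tendsto (fun n => 2^u.length * ∫ y, DD X y ∂(m (ms n))) atTop (𝓝 0) := by
      have := hDms.const_mul ((2:ℝ)^u.length)
      simpa using this
    have hle : g u ≤ 0 := le_of_tendsto_of_tendsto' (hpt u) hconst hub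
    exact le_antisymm hle (h0 u)
  -- the limit measure
  set lam : Measure Conf := QM g with hlam
  have hlamcyl : ∀ u, lam (cylL u) = ENNReal.ofReal (g u) := fun u => QM_cylL h0 hadd h1 u
  haveI hlamprob : IsProbabilityMeasure lam := by
    constructor
    rw [← cylL_nil, hlamcyl, h1, ENNReal.ofReal_one]
  have hlaminv : lam.map shiftMap = lam := by
    haveI : IsProbabilityMeasure (lam.map shiftMap) :=
      Measure.isProbabilityMeasure_map measurable_shiftMap.aemeasurable
    apply measure_ext_cylL
    intro u
    rw [Measure.map_apply measurable_shiftMap (measurableSet_cylL u), shift_preimage_cylL,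
      measure_union (disjoint_cylL_cons u u) (measurableSet_cylL _), hlamcyl, hlamcyl, hlamcyl,
      ← ENNReal.ofReal_add (h0 _) (h0 _), hshift u]
  have hlamX : lam X = 1 := by
    have hcompl : lam Xᶜ = 0 := by
      have hsub : Xᶜ ⊆ ⋃ u ∈ {u : List Bool | cylL u ∩ X = ∅}, cylL u := by
        intro x hx
        have hV : Xᶜ ∈ 𝓝 x := (hX.2.1.isOpen_compl).mem_nhds hx
        obtain ⟨k, hk⟩ := exists_cyl_nbhd hV
        refine Set.mem_biUnion (x := List.ofFn (fun i : Fin k => x i)) ?_ ?_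
        · show cylL (List.ofFn (fun i : Fin k => x i)) ∩ X = ∅
          apply Set.eq_empty_iff_forall_notMem.2
          rintro y ⟨hy, hyX⟩
          refine hk y ?_ hyX
          intro i hi
          have h1 : i < (List.ofFn (fun i : Fin k => x i)).length := by simpa using hi
          have h2 := mem_cylL.1 hy i h1
          rw [List.getElem_ofFn] at h2
          exact h2
        · rw [mem_cylL]
          intro i hi
          rw [List.getElem_ofFn]
      apply measure_mono_null hsub
      apply (measure_biUnion_null_iff (Set.to_countable _)).2
      intro u hu
      rw [hlamcyl, hvan u hu, ENNReal.ofReal_zero]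
    have := measure_add_measure_compl (μ := lam) hX.2.1.measurableSet
    rw [hcompl, add_zero] at this
    rw [this, measure_univ]
  have hlameq : lam = ν := huniq lam ⟨hlamprob, hlaminv⟩ hlamX
  refine ⟨ms, hmono, fun u => ?_⟩
  have : (ν (cylL u)).toReal = g u := by
    rw [← hlameq, hlamcyl, ENNReal.toReal_ofReal (h0 u)]
  rw [this]
  exact hpt u
/-! ### Part H: conclusion -/

def padW {k : ℕ} (w : Fin k → Bool) : Conf := fun i => if h : i < k then w ⟨i, h⟩ else false

lemma integral_cyl_sum (μ : Measure Conf) [IsProbabilityMeasure μ] {k : ℕ} (c : (Fin k → Bool) → ℝ) :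
    ∫ x, (∑ w : Fin k → Bool, Set.indicator (_root_.cylinder w) (fun _ => c w) x) ∂μ
      = ∑ w : Fin k → Bool, (μ (_root_.cylinder w)).toReal * c w := by
  rw [integral_finset_sum]
  · apply Finset.sum_congr rfl
    intro w _
    rw [integral_indicator_const (c w) (measurableSet_cylinder w)]
    simp [smul_eq_mul]
    exact Or.inl rfl
  · intro w _
    exact (integrable_const (c w)).indicator (measurableSet_cylinder w)

lemma integral_tendsto_of_cylinder (m : ℕ → Measure Conf)
    (hprob : ∀ n, IsProbabilityMeasure (m n)) (ν : Measure Conf) [IsProbabilityMeasure ν]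
    (hcyl : ∀ u : List Bool,
      Tendsto (fun n => (m n (cylL u)).toReal) atTop (𝓝 ((ν (cylL u)).toReal)))
    (f : C(Conf, ℝ)) :
    Tendsto (fun n => ∫ x, f x ∂(m n)) atTop (𝓝 (∫ x, f x ∂ν)) := by
  haveI := hprob
  rw [Metric.tendsto_atTop]
  intro ε hε
  have hε4 : 0 < ε/4 := by linarith
  obtain ⟨k, hk⟩ := exists_uniform_cylinder_approx f hε4
  set g : Conf → ℝ :=
    fun x => ∑ w : Fin k → Bool, Set.indicator (_root_.cylinder w) (fun _ => f (padW w)) x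
    with hgdef
  -- pointwise approximation
  have hfg : ∀ x : Conf, |f x - g x| ≤ ε/4 := by
    intro x
    have hgx : g x = f (padW (fun i : Fin k => x i)) := by
      rw [hgdef]
      dsimp only
      rw [Finset.sum_eq_single (fun i : Fin k => x i)]
      · rw [Set.indicator_of_mem (by exact fun i => rfl)]
      · intro w _ hw
        apply Set.indicator_of_notMem
        intro hxw
        exact hw (funext fun i => (hxw i).symm)
      · intro h
        exact absurd (Finset.mem_univ _) h
    rw [hgx]
    apply hk
    intro i hi
    simp [padW, hi]
  -- integral of g
  have hgint : ∀ (μ : Measure Conf) [IsProbabilityMeasure μ],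
      ∫ x, g x ∂μ = ∑ w : Fin k → Bool, (μ (_root_.cylinder w)).toReal * f (padW w) := by
    intro μ _
    exact integral_cyl_sum μ _
  -- integrability
  have hgmeas : ∀ (μ : Measure Conf) [IsProbabilityMeasure μ], Integrable g μ := by
    intro μ _
    apply integrable_finset_sum
    intro w _
    exact (integrable_const _).indicator (measurableSet_cylinder w)
  have hfint : ∀ (μ : Measure Conf) [IsProbabilityMeasure μ], Integrable (⇑f) μ :=
    fun μ _ => integrable_of_continuous f.continuous μ
  -- |∫ f - ∫ g| ≤ ε/4 for any probability measure
  have hbound : ∀ (μ : Measure Conf) [IsProbabilityMeasure μ],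
      |∫ x, f x ∂μ - ∫ x, g x ∂μ| ≤ ε/4 := by
    intro μ _
    rw [← integral_sub (hfint μ) (hgmeas μ)]
    calc |∫ x, (f x - g x) ∂μ| ≤ ∫ x, |f x - g x| ∂μ := by
          simpa [Real.norm_eq_abs] using
            MeasureTheory.norm_integral_le_integral_norm (μ := μ) (fun x => f x - g x)
      _ ≤ ∫ _x, (ε/4) ∂μ := by
          apply integral_mono ((hfint μ).sub (hgmeas μ)).abs (integrable_const _)
          exact fun x => hfg x
      _ = ε/4 := by simp
  -- the finite sums converge
  have hsum : Tendsto (fun n => ∑ w : Fin k → Bool, (m n (_root_.cylinder w)).toReal * f (padW w))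
      atTop (𝓝 (∑ w : Fin k → Bool, (ν (_root_.cylinder w)).toReal * f (padW w))) := by
    apply tendsto_finset_sum
    intro w _
    have := hcyl (List.ofFn w)
    rw [← cylinder_eq_cylL] at this
    exact this.mul_const _
  rw [Metric.tendsto_atTop] at hsum
  obtain ⟨N, hN⟩ := hsum (ε/4) hε4
  refine ⟨N, fun n hn => ?_⟩
  have h1 := hbound (m n)
  have h2 := hbound ν
  have h3 := hN n hn
  rw [Real.dist_eq] at h3 ⊢
  have hg1 : ∫ x, g x ∂(m n) = ∑ w : Fin k → Bool, (m n (_root_.cylinder w)).toReal * f (padW w) :=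
    hgint (m n)
  have hg2 : ∫ x, g x ∂ν = ∑ w : Fin k → Bool, (ν (_root_.cylinder w)).toReal * f (padW w) :=
    hgint ν
  have key : |∫ x, f x ∂(m n) - ∫ x, f x ∂ν| ≤
      |∫ x, f x ∂(m n) - ∫ x, g x ∂(m n)| + |∫ x, g x ∂(m n) - ∫ x, g x ∂ν|
        + |∫ x, g x ∂ν - ∫ x, f x ∂ν| := by
    have := abs_sub_le (∫ x, f x ∂(m n)) (∫ x, g x ∂ν) (∫ x, f x ∂ν)
    have h' := abs_sub_le (∫ x, f x ∂(m n)) (∫ x, g x ∂(m n)) (∫ x, g x ∂ν)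
    linarith
  have habs2 : |∫ x, g x ∂(m n) - ∫ x, g x ∂ν| < ε/4 := by
    rw [hg1, hg2]
    exact h3
  have habs3 : |∫ x, g x ∂ν - ∫ x, f x ∂ν| = |∫ x, f x ∂ν - ∫ x, g x ∂ν| := abs_sub_comm _ _
  rw [habs3] at key
  linarith

/-- If `X ⊆ {0,1}^ℕ` is a uniquely ergodic subshift, with unique
shift-invariant Borel probability measure `ν` supported on `X`, then every choice of
equilibrium states `μ β` for `β φ_X` converges weak-* to `ν` as `β → +∞`. -/
theorem stmt11 (X : Set Conf) (hX : IsSubshift X)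
    (ν : Measure Conf) (hν : IsInvProb ν) (hνX : ν X = 1)
    (huniq : ∀ ν' : Measure Conf, IsInvProb ν' → ν' X = 1 → ν' = ν)
    (μ : ℝ → Measure Conf)
    (hμ : ∀ β : ℝ, 0 < β → IsEquilibriumState (phiX X) β (μ β)) :
    ∀ f : C(Conf, ℝ),
      Tendsto (fun β : ℝ => ∫ x, f x ∂(μ β)) atTop (𝓝 (∫ x, f x ∂ν)) := by
  intro f
  haveI := hν.1
  rw [Filter.tendsto_iff_seq_tendsto]
  intro b hb
  apply Filter.tendsto_of_subseq_tendsto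
  intro ns hns
  have hc : Tendsto (fun k => b (ns k)) atTop atTop := hb.comp hns
  obtain ⟨K, hK⟩ := Filter.eventually_atTop.1 (hc.eventually_ge_atTop 1)
  set m : ℕ → Measure Conf := fun j => μ (b (ns (j + K))) with hm_def
  have hpos : ∀ j : ℕ, (0:ℝ) < b (ns (j + K)) := fun j =>
    lt_of_lt_of_le one_pos (hK (j + K) (by omega))
  have hminv : ∀ j, IsInvProb (m j) := fun j => (hμ _ (hpos j)).1
  have hDle : ∀ j, ∫ y, DD X y ∂(m j) ≤ 1 / b (ns (j + K)) := fun j =>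
    integral_DD_le_inv hX hν hνX (hpos j) (hμ _ (hpos j))
  have hD0 : ∀ j, 0 ≤ ∫ y, DD X y ∂(m j) := fun j =>
    integral_nonneg (fun y => DD_nonneg hX.1 y)
  have htail : Tendsto (fun j => b (ns (j + K))) atTop atTop :=
    hc.comp (tendsto_add_atTop_nat K)
  have hinv0 : Tendsto (fun j => 1 / b (ns (j + K))) atTop (𝓝 0) := by
    simpa [one_div, Pi.inv_def] using htail.inv_tendsto_atTop
  have hD : Tendsto (fun j => ∫ y, DD X y ∂(m j)) atTop (𝓝 0) :=
    tendsto_of_tendsto_of_tendsto_of_le_of_le tendsto_const_nhds hinv0 hD0 hDle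
  obtain ⟨ms, hmono, hcyl⟩ := key_subseq hX hν hνX huniq m hminv hD
  refine ⟨fun n => ms n + K, ?_⟩
  have hfin := integral_tendsto_of_cylinder (fun n => m (ms n))
    (fun n => (hminv (ms n)).1) ν (fun u => hcyl u) f
  exact hfin

end
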